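/- With the Sum criterion and α = 1, the column sums of tile norms are non-increasing: if ‖(A_{k,k}^(k))⁻¹‖₁⁻¹ ≥ Σ_{i>k} ‖A_{i,k}^(k)‖₁, then Σ_{i>k} ‖A_{i,j}^(k+1)‖₁ ≤ Σ_{i≥k} ‖A_{i,j}^(k)‖₁ for every j > k. -/

import Mathlib

/-- The induced matrix 1-norm (maximum absolute column sum). -/
noncomputable def norm1 {ι κ : Type*} [Fintype ι] [Fintype κ] (M : Matrix ι κ ℝ) : ℝ :=
  ⨆ j, ∑ i, |M i j|

lemma norm1_nonneg {ι κ : Type*} [Fintype ι] [Fintype κ] (M : Matrix ι κ ℝ) :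
    0 ≤ norm1 M :=
  Real.iSup_nonneg fun _ => Finset.sum_nonneg fun _ _ => abs_nonneg _

lemma colsum_le_norm1 {ι κ : Type*} [Fintype ι] [Fintype κ] (M : Matrix ι κ ℝ) (j : κ) :
    ∑ i, |M i j| ≤ norm1 M :=
  le_ciSup (Set.Finite.bddAbove (Set.finite_range (fun j => ∑ i, |M i j|))) j

lemma norm1_sub_le {ι κ : Type*} [Fintype ι] [Fintype κ] (M N : Matrix ι κ ℝ) :
    norm1 (M - N) ≤ norm1 M + norm1 N := by
  apply Real.iSup_le _ (add_nonneg (norm1_nonneg M) (norm1_nonneg N))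
  intro j
  calc ∑ i, |(M - N) i j| ≤ ∑ i, (|M i j| + |N i j|) := by
        apply Finset.sum_le_sum
        intro i _
        exact abs_sub _ _
    _ = (∑ i, |M i j|) + ∑ i, |N i j| := Finset.sum_add_distrib
    _ ≤ norm1 M + norm1 N := add_le_add (colsum_le_norm1 M j) (colsum_le_norm1 N j)

lemma norm1_mul_le {ι κ μ : Type*} [Fintype ι] [Fintype κ] [Fintype μ]
    (M : Matrix ι κ ℝ) (N : Matrix κ μ ℝ) :
    norm1 (M * N) ≤ norm1 M * norm1 N := by
  apply Real.iSup_le _ (mul_nonneg (norm1_nonneg M) (norm1_nonneg N))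
  intro j
  calc ∑ i, |(M * N) i j| = ∑ i, |∑ l, M i l * N l j| := by
        simp [Matrix.mul_apply]
    _ ≤ ∑ i, ∑ l, |M i l * N l j| := by
        apply Finset.sum_le_sum
        intro i _
        exact Finset.abs_sum_le_sum_abs _ _
    _ = ∑ l, ∑ i, |M i l| * |N l j| := by
        rw [Finset.sum_comm]
        simp [abs_mul]
    _ = ∑ l, (∑ i, |M i l|) * |N l j| := by
        simp [Finset.sum_mul]
    _ ≤ ∑ l, norm1 M * |N l j| := by
        apply Finset.sum_le_sum
        intro l _
        exact mul_le_mul_of_nonneg_right (colsum_le_norm1 M l) (abs_nonneg _)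
    _ = norm1 M * ∑ l, |N l j| := by rw [Finset.mul_sum]
    _ ≤ norm1 M * norm1 N :=
        mul_le_mul_of_nonneg_left (colsum_le_norm1 N j) (norm1_nonneg M)

/-- With the Sum criterion and `α = 1`, the column sums of tile norms are non-increasing
under the Schur update. -/
theorem sum_criterion_alpha_one_nonincreasing
    {n nb : ℕ} (A : Fin n → Fin n → Matrix (Fin nb) (Fin nb) ℝ)
    (k : Fin n)
    (hinv : IsUnit (A k k))
    (hcrit : ∑ i ∈ Finset.univ.filter (fun i => k < i), norm1 (A i k)
      ≤ (norm1 ((A k k)⁻¹))⁻¹) :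
    ∀ j, k < j →
      ∑ i ∈ Finset.univ.filter (fun i => k < i),
          norm1 (A i j - A i k * (A k k)⁻¹ * A k j)
        ≤ ∑ i ∈ Finset.univ.filter (fun i => k ≤ i), norm1 (A i j) := by
  intro j hj
  set B := (A k k)⁻¹ with hBdef
  set c := norm1 B * norm1 (A k j) with hc
  have hB : 0 ≤ norm1 B := norm1_nonneg _
  have hAkj : 0 ≤ norm1 (A k j) := norm1_nonneg _
  have hterm : ∀ i, norm1 (A i j - A i k * B * A k j)
      ≤ norm1 (A i j) + norm1 (A i k) * c := by
    intro i
    have h1 : norm1 (A i k * B * A k j) ≤ norm1 (A i k) * c := by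
      calc norm1 (A i k * B * A k j) ≤ norm1 (A i k * B) * norm1 (A k j) :=
            norm1_mul_le _ _
        _ ≤ norm1 (A i k) * norm1 B * norm1 (A k j) :=
            mul_le_mul_of_nonneg_right (norm1_mul_le _ _) hAkj
        _ = norm1 (A i k) * c := by rw [hc, mul_assoc]
    calc norm1 (A i j - A i k * B * A k j)
        ≤ norm1 (A i j) + norm1 (A i k * B * A k j) := norm1_sub_le _ _
      _ ≤ norm1 (A i j) + norm1 (A i k) * c := by linarith
  have hsumk_nonneg : 0 ≤ ∑ i ∈ Finset.univ.filter (fun i => k < i), norm1 (A i k) :=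
    Finset.sum_nonneg fun i _ => norm1_nonneg _
  have hkey : (∑ i ∈ Finset.univ.filter (fun i => k < i), norm1 (A i k)) * c
      ≤ norm1 (A k j) := by
    have h2 : (∑ i ∈ Finset.univ.filter (fun i => k < i), norm1 (A i k)) * norm1 B ≤ 1 := by
      rcases eq_or_lt_of_le hB with h0 | h0
      · rw [← h0, mul_zero]; norm_num
      · have := mul_le_mul_of_nonneg_right hcrit (le_of_lt h0)
        rwa [inv_mul_cancel₀ (ne_of_gt h0)] at this
    calc (∑ i ∈ Finset.univ.filter (fun i => k < i), norm1 (A i k)) * c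
        = (∑ i ∈ Finset.univ.filter (fun i => k < i), norm1 (A i k)) * norm1 B
            * norm1 (A k j) := by rw [hc, mul_assoc]
      _ ≤ 1 * norm1 (A k j) := mul_le_mul_of_nonneg_right h2 hAkj
      _ = norm1 (A k j) := one_mul _
  have hsplit : Finset.univ.filter (fun i : Fin n => k ≤ i)
      = insert k (Finset.univ.filter (fun i => k < i)) := by
    ext i
    simp only [Finset.mem_insert, Finset.mem_filter, Finset.mem_univ, true_and]
    constructor
    · intro h
      rcases eq_or_lt_of_le h with h | h
      · exact Or.inl h.symm
      · exact Or.inr h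
    · rintro (rfl | h)
      · exact le_refl _
      · exact le_of_lt h
  have hknot : k ∉ Finset.univ.filter (fun i : Fin n => k < i) := by
    simp
  calc ∑ i ∈ Finset.univ.filter (fun i => k < i),
          norm1 (A i j - A i k * B * A k j)
      ≤ ∑ i ∈ Finset.univ.filter (fun i => k < i),
          (norm1 (A i j) + norm1 (A i k) * c) :=
        Finset.sum_le_sum fun i _ => hterm i
    _ = (∑ i ∈ Finset.univ.filter (fun i => k < i), norm1 (A i j))
        + (∑ i ∈ Finset.univ.filter (fun i => k < i), norm1 (A i k)) * c := by
        rw [Finset.sum_add_distrib, Finset.sum_mul]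
    _ ≤ (∑ i ∈ Finset.univ.filter (fun i => k < i), norm1 (A i j))
        + norm1 (A k j) := by linarith
    _ = ∑ i ∈ Finset.univ.filter (fun i => k ≤ i), norm1 (A i j) := by
        rw [hsplit, Finset.sum_insert hknot]
        ring
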